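/- arXiv:2001.11260 — 2 statements merged into one kernel-verified Lean document; each statement's English description precedes it below -/
import Mathlib

section
/- For every n ≥ 1 and complex numbers z₁,…,z_n, w₁,…,w_n such that zⱼ ≠ 0, wᵢ·zⱼ ≠ 1 and wᵢ ≠ zⱼ for all i, j, one has det[ 1/((1 − wᵢzⱼ)(1 − wᵢ/zⱼ)) ]_{1≤i,j≤n} = ( Π_{1≤i<j≤n} (zᵢ − zⱼ)(wᵢ − wⱼ)(1 − wᵢwⱼ)(1 − 1/(zᵢzⱼ)) ) / ( Π_{i=1}^n Π_{j=1}^n (1 − wᵢzⱼ)(1 − wᵢ/zⱼ) ). -/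
open scoped BigOperators
open Filter

/-- An integer partition: a weakly decreasing sequence of naturals, eventually zero.
`f i` is the `(i+1)`-st part `λ_{i+1}` (zero-indexed); parts beyond the length are `0`. -/
structure Partn where
  f : ℕ → ℕ
  antitone : ∀ ⦃i j : ℕ⦄, i ≤ j → f j ≤ f i
  finsupp : ∃ N, ∀ i, N ≤ i → f i = 0

namespace Partn

/-- The length `ℓ(λ)`: the number of nonzero parts. -/
noncomputable def len (lam : Partn) : ℕ := sInf {N | lam.f N = 0}

/-- The size `|λ|`. -/
noncomputable def size (lam : Partn) : ℕ := ∑ i ∈ Finset.range lam.len, lam.f i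

/-- The conjugate partition: `conj lam i = λ'_{i+1} = #{j : λ_j ≥ i+1}` (zero-indexed). -/
noncomputable def conj (lam : Partn) (i : ℕ) : ℕ :=
  ((Finset.range lam.len).filter fun j => i < lam.f j).card

/-- The Frobenius rank `d(λ) = #{i ≥ 1 : λ_i ≥ i}`. -/
noncomputable def frobDiag (lam : Partn) : ℕ :=
  ((Finset.range lam.len).filter fun i => i < lam.f i).card

/-- Membership in the set `A`: Frobenius coordinates `(a₁,…,a_d | a₁+1,…,a_d+1)`,
i.e. `λ'_i = λ_i + 1` for `1 ≤ i ≤ d(λ)`. -/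
def InA (lam : Partn) : Prop := ∀ i < lam.frobDiag, lam.conj i = lam.f i + 1

/-- Membership in the set `B`: Frobenius coordinates `(b₁+1,…,b_d+1 | b₁,…,b_d)`,
i.e. `λ_i = λ'_i + 1` for `1 ≤ i ≤ d(λ)`. -/
def InB (lam : Partn) : Prop := ∀ i < lam.frobDiag, lam.f i = lam.conj i + 1

/-- The cells of the Young diagram of `λ` (zero-indexed): `(i,j)` with `j < λ_{i+1}`. -/
noncomputable def cells (lam : Partn) : Finset (ℕ × ℕ) :=
  (Finset.range lam.len ×ˢ Finset.range (lam.f 0)).filter fun p => p.2 < lam.f p.1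

/-- `dim λ`: the number of standard Young tableaux of shape `λ`, i.e. fillings of the
diagram with `1, …, |λ|`, each used exactly once, strictly increasing along rows and columns. -/
noncomputable def dim (lam : Partn) : ℕ :=
  Nat.card {T : ℕ × ℕ → ℕ //
    Set.BijOn T (lam.cells : Set (ℕ × ℕ)) (Set.Icc 1 lam.size) ∧
    (∀ p, p ∉ lam.cells → T p = 0) ∧
    (∀ i j j', (i, j) ∈ lam.cells → (i, j') ∈ lam.cells → j < j' → T (i, j) < T (i, j')) ∧
    (∀ i i' j, (i, j) ∈ lam.cells → (i', j) ∈ lam.cells → i < i' → T (i, j) < T (i', j))}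

end Partn

/-- The complete homogeneous coefficients `h_n(ρ)` of a specialization `ρ` given by its
power sums `p : ℕ → ℂ` (only `p k`, `k ≥ 1`, is used): the coefficients of
`H(ρ;z) = exp (∑_{k ≥ 1} p_k z^k / k) = ∑_{n ≥ 0} h_n z^n`, characterized by `h_0 = 1` and the
Newton-type recursion `(n+1)·h_{n+1} = ∑_{k=0}^{n} p_{k+1} h_{n-k}`. -/
noncomputable def hcf (p : ℕ → ℂ) : ℕ → ℂ
  | 0 => 1
  | n + 1 => ((n : ℂ) + 1)⁻¹ * ∑ k ∈ Finset.range (n + 1), p (k + 1) * hcf p (n - k)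
decreasing_by exact Nat.lt_succ_of_le (Nat.sub_le n k)

/-- `h_k(ρ)` for integer `k`, with `h_k = 0` for `k < 0`. -/
noncomputable def hz (p : ℕ → ℂ) (k : ℤ) : ℂ := if k < 0 then 0 else hcf p k.toNat

/-- The Schur function `s_λ(ρ) = det[h_{λ_i - i + j}]_{1 ≤ i,j ≤ ℓ(λ)}`. -/
noncomputable def schur (p : ℕ → ℂ) (lam : Partn) : ℂ :=
  Matrix.det (Matrix.of fun i j : Fin lam.len =>
    hz p ((lam.f i.val : ℤ) - (i.val : ℤ) + (j.val : ℤ)))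

/-- The (lifted) symplectic character
`sp_λ(ρ) = (1/2)·det[h_{λ_i - i + j} + h_{λ_i - i - j + 2}]_{1 ≤ i,j ≤ ℓ(λ)}`, equal to 1 for
the empty partition.  (Zero-indexed, the second entry index is `λ_i - i - j`.) -/
noncomputable def spChar (p : ℕ → ℂ) (lam : Partn) : ℂ :=
  if lam.len = 0 then 1 else
    (1 / 2 : ℂ) * Matrix.det (Matrix.of fun i j : Fin lam.len =>
      hz p ((lam.f i.val : ℤ) - (i.val : ℤ) + (j.val : ℤ)) +
      hz p ((lam.f i.val : ℤ) - (i.val : ℤ) - (j.val : ℤ)))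

/-- The (lifted) orthogonal character
`o_λ(ρ) = det[h_{λ_i - i + j} - h_{λ_i - i - j}]_{1 ≤ i,j ≤ ℓ(λ)}`, equal to 1 for
the empty partition. (Zero-indexed, the second entry index is `λ_i - i - j - 2`.) -/
noncomputable def oChar (p : ℕ → ℂ) (lam : Partn) : ℂ :=
  Matrix.det (Matrix.of fun i j : Fin lam.len =>
    hz p ((lam.f i.val : ℤ) - (i.val : ℤ) + (j.val : ℤ)) -
    hz p ((lam.f i.val : ℤ) - (i.val : ℤ) - (j.val : ℤ) - 2))

/-- `H(ρ; z) = exp (∑_{k ≥ 1} p_k(ρ) z^k / k)`. -/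
noncomputable def Hfun (p : ℕ → ℂ) (z : ℂ) : ℂ :=
  Complex.exp (∑' k : ℕ, p (k + 1) * z ^ (k + 1) / ((k : ℂ) + 1))

/-- `F(z) = H(ρ⁺;z) / (H(ρ⁻;z) H(ρ⁻;1/z))`. -/
noncomputable def Ffun (pp pm : ℕ → ℂ) (z : ℂ) : ℂ :=
  Hfun pp z / (Hfun pm z * Hfun pm z⁻¹)

/-- `Z_sp = exp ∑_{k ≥ 1} ( p_k(ρ⁺)p_k(ρ⁻)/k + p_{2k}(ρ⁻)/(2k) − p_k(ρ⁻)²/(2k) )`. -/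
noncomputable def Zsp (pp pm : ℕ → ℂ) : ℂ :=
  Complex.exp (∑' k : ℕ,
    (pp (k + 1) * pm (k + 1) / ((k : ℂ) + 1) + pm (2 * (k + 1)) / (2 * ((k : ℂ) + 1))
      - pm (k + 1) ^ 2 / (2 * ((k : ℂ) + 1))))

/-- `Z_o = exp ∑_{k ≥ 1} ( p_k(ρ⁺)p_k(ρ⁻)/k − p_{2k}(ρ⁻)/(2k) − p_k(ρ⁻)²/(2k) )`. -/
noncomputable def Zo (pp pm : ℕ → ℂ) : ℂ :=
  Complex.exp (∑' k : ℕ,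
    (pp (k + 1) * pm (k + 1) / ((k : ℂ) + 1) - pm (2 * (k + 1)) / (2 * ((k : ℂ) + 1))
      - pm (k + 1) ^ 2 / (2 * ((k : ℂ) + 1))))

/-- The symplectic correlation kernel `K_sp(a + 1/2, b + 1/2)` for `a, b ∈ ℤ`
(half-integer points are parametrized as `a + 1/2`, `a ∈ ℤ`), with contour radii `Rz, Rw`:
`K_sp = (2πi)⁻² ∮∮ (F(z)/F(w)) (1−w²)/((1−wz)(1−w/z)) z^{−(a+1/2)−3/2} w^{(b+1/2)−1/2} dz dw`. -/
noncomputable def Ksp (pp pm : ℕ → ℂ) (Rz Rw : ℝ) (a b : ℤ) : ℂ :=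
  ((2 * Real.pi * Complex.I)⁻¹) ^ 2 *
    ∮ z in C(0, Rz), ∮ w in C(0, Rw),
      Ffun pp pm z / Ffun pp pm w * ((1 - w ^ 2) / ((1 - w * z) * (1 - w / z))) *
        z ^ (-a - 2) * w ^ b

/-- The orthogonal correlation kernel `K_o(a + 1/2, b + 1/2)` for `a, b ∈ ℤ`. -/
noncomputable def Ko (pp pm : ℕ → ℂ) (Rz Rw : ℝ) (a b : ℤ) : ℂ :=
  ((2 * Real.pi * Complex.I)⁻¹) ^ 2 *
    ∮ z in C(0, Rz), ∮ w in C(0, Rw),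
      Ffun pp pm z / Ffun pp pm w * ((1 - z ^ 2) / ((1 - w * z) * (1 - w / z))) *
        z ^ (-a - 2) * w ^ b

/-- The Laurent coefficients `f_k = ∑_{j ≥ max(0,−k)} h_{k+j}(ρ⁺) h_j(ρ⁻)` of the symbol
`f(z) = H(ρ⁺;z)·H(ρ⁻;1/z)`. -/
noncomputable def fcoef (pp pm : ℕ → ℂ) (k : ℤ) : ℂ :=
  ∑' j : ℕ, hz pp (k + (j : ℤ)) * hcf pm j

/-- The symbol `f(z) = H(ρ⁺;z)·H(ρ⁻;1/z)`. -/
noncomputable def symb (pp pm : ℕ → ℂ) (z : ℂ) : ℂ := Hfun pp z * Hfun pm z⁻¹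

/-- The Laurent coefficients `f̌_k` of `f̌(z) = 1/f(−z)`, computed on the circle `|z| = R`:
`f̌_k = (2πi)⁻¹ ∮_{|z|=R} f̌(z) z^{−k−1} dz`. -/
noncomputable def fcheck (pp pm : ℕ → ℂ) (R : ℝ) (k : ℤ) : ℂ :=
  (2 * Real.pi * Complex.I)⁻¹ * ∮ z in C(0, R), (symb pp pm (-z))⁻¹ * z ^ (-k - 1)

/-- The Plancherel specialization `pl_θ`: `p_1 = θ`, `p_k = 0` for `k ≥ 2`. -/
noncomputable def plSpec (θ : ℝ) : ℕ → ℂ := fun k => if k = 1 then (θ : ℂ) else 0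

/-- The Airy function `Ai(x) = (1/π)·lim_{T→∞} ∫₀^T cos(t³/3 + xt) dt`. -/
noncomputable def Ai (x : ℝ) : ℝ :=
  (1 / Real.pi) * limUnder Filter.atTop
    (fun T : ℝ => ∫ t in (0 : ℝ)..T, Real.cos (t ^ 3 / 3 + x * t))

/-- The Airy `2→1` kernel `A₊(x,y) = ∫₀^∞ Ai(x+t)Ai(y+t) dt + ∫₀^∞ Ai(x−t)Ai(y+t) dt`. -/
noncomputable def Aplus (x y : ℝ) : ℝ :=
  (∫ t in Set.Ioi (0 : ℝ), Ai (x + t) * Ai (y + t)) +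
    ∫ t in Set.Ioi (0 : ℝ), Ai (x - t) * Ai (y + t)

/-- The dual kernel `A₋(x,y) = ∫₀^∞ Ai(x+t)Ai(y+t) dt − ∫₀^∞ Ai(x−t)Ai(y+t) dt`. -/
noncomputable def Aminus (x y : ℝ) : ℝ :=
  (∫ t in Set.Ioi (0 : ℝ), Ai (x + t) * Ai (y + t)) -
    ∫ t in Set.Ioi (0 : ℝ), Ai (x - t) * Ai (y + t)

/-- The Airy kernel `K_Ai(x,y) = ∫₀^∞ Ai(x+t)Ai(y+t) dt`. -/
noncomputable def KAiry (x y : ℝ) : ℝ :=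
  ∫ t in Set.Ioi (0 : ℝ), Ai (x + t) * Ai (y + t)

/-- The Fredholm determinant `det(1−K)_{L²(s,∞)}
= ∑_{n≥0} ((−1)^n/n!) ∫_{(s,∞)^n} det[K(xᵢ,xⱼ)] dx`. -/
noncomputable def fredholmDet (K : ℝ → ℝ → ℝ) (s : ℝ) : ℝ :=
  ∑' n : ℕ, ((-1 : ℝ) ^ n / (n.factorial : ℝ)) *
    ∫ x in (Set.univ.pi fun _ : Fin n => Set.Ioi s),
      Matrix.det (Matrix.of fun i j : Fin n => K (x i) (x j))

open Finset Matrix in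
theorem gcauchy : ∀ (n : ℕ) (s t u : Fin n → ℂ), (∀ i j, s i - t i * u j ≠ 0) →
    Matrix.det (Matrix.of fun i j : Fin n => (s i - t i * u j)⁻¹) =
      (∏ i : Fin n, ∏ j ∈ Finset.Ioi i, (t i * s j - t j * s i) * (u i - u j)) /
        ∏ i : Fin n, ∏ j : Fin n, (s i - t i * u j) := by
  intro n
  induction n with
  | zero =>
    intro s t u h
    simp [Matrix.det_eq_one_of_card_eq_zero (Fintype.card_fin 0)]
  | succ n ih =>
    intro s t u h
    set d : Fin (n+1) → Fin (n+1) → ℂ := fun i j => s i - t i * u j with hd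
    have hd0 : ∀ i j, d i j ≠ 0 := h
    -- Step 0: transpose
    have step0 : Matrix.det (Matrix.of fun i j : Fin (n+1) => (d i j)⁻¹)
        = Matrix.det (Matrix.of fun i j : Fin (n+1) => (d j i)⁻¹) := by
      rw [← Matrix.det_transpose]; rfl
    -- Step 1: row operations with pivot 0 (on the transposed matrix)
    have step1 : Matrix.det (Matrix.of fun i j : Fin (n+1) => (d j i)⁻¹)
        = Matrix.det (Matrix.of fun i j : Fin (n+1) =>
            if i = 0 then (d j 0)⁻¹ else t j * (u i - u 0) * ((d j i)⁻¹ * (d j 0)⁻¹)) := by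
      refine Matrix.det_eq_of_forall_row_eq_smul_add_const
        (fun i => if i = 0 then 0 else 1) 0 (if_pos rfl) ?_
      intro i j
      by_cases hi : i = 0
      · simp [hi]
      · simp only [Matrix.of_apply, if_neg hi, one_mul, eq_self_iff_true, if_true]
        have h1 := hd0 j i
        have h2 := hd0 j 0
        field_simp
        simp only [hd]; ring
    -- Step 2: factor (u i - u 0) from row i ≠ 0
    have step2 : Matrix.det (Matrix.of fun i j : Fin (n+1) =>
            if i = 0 then (d j 0)⁻¹ else t j * (u i - u 0) * ((d j i)⁻¹ * (d j 0)⁻¹))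
        = (∏ i : Fin (n+1), if i = 0 then 1 else u i - u 0) *
          Matrix.det (Matrix.of fun i j : Fin (n+1) =>
            if i = 0 then (d j 0)⁻¹ else t j * ((d j i)⁻¹ * (d j 0)⁻¹)) := by
      rw [← Matrix.det_mul_column]
      congr 1
      ext i j
      by_cases hi : i = 0 <;> simp [hi] <;> ring
    -- Step 3: factor (d j 0)⁻¹ from column j
    have step3 : Matrix.det (Matrix.of fun i j : Fin (n+1) =>
            if i = 0 then (d j 0)⁻¹ else t j * ((d j i)⁻¹ * (d j 0)⁻¹))
        = (∏ j : Fin (n+1), (d j 0)⁻¹) *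
          Matrix.det (Matrix.of fun i j : Fin (n+1) =>
            if i = 0 then 1 else t j * (d j i)⁻¹) := by
      rw [← Matrix.det_mul_row]
      congr 1
      ext i j
      by_cases hi : i = 0 <;> simp [hi] <;> ring
    -- Step 4: transpose back
    have step4 : Matrix.det (Matrix.of fun i j : Fin (n+1) =>
            if i = 0 then 1 else t j * (d j i)⁻¹)
        = Matrix.det (Matrix.of fun i j : Fin (n+1) =>
            if j = 0 then 1 else t i * (d i j)⁻¹) := by
      rw [← Matrix.det_transpose]; rfl
    -- Step 5: row operations with pivot 0
    have step5 : Matrix.det (Matrix.of fun i j : Fin (n+1) =>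
            if j = 0 then 1 else t i * (d i j)⁻¹)
        = Matrix.det (Matrix.of fun i j : Fin (n+1) =>
            if i = 0 then (if j = 0 then 1 else t 0 * (d 0 j)⁻¹)
            else (if j = 0 then 0
              else (t i * s 0 - t 0 * s i) * ((d i j)⁻¹ * (d 0 j)⁻¹))) := by
      refine Matrix.det_eq_of_forall_row_eq_smul_add_const
        (fun i => if i = 0 then 0 else 1) 0 (if_pos rfl) ?_
      intro i j
      by_cases hi : i = 0
      · simp [hi]
      · by_cases hj : j = 0
        · simp [hi, hj]
        · simp only [Matrix.of_apply, if_neg hi, if_neg hj, one_mul, eq_self_iff_true, if_true]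
          have h1 := hd0 i j
          have h2 := hd0 0 j
          field_simp
          simp only [hd]; ring
    -- Step 6: expand along column 0
    have step6 : Matrix.det (Matrix.of fun i j : Fin (n+1) =>
            if i = 0 then (if j = 0 then 1 else t 0 * (d 0 j)⁻¹)
            else (if j = 0 then 0
              else (t i * s 0 - t 0 * s i) * ((d i j)⁻¹ * (d 0 j)⁻¹)))
        = Matrix.det (Matrix.of fun i j : Fin n =>
            (t i.succ * s 0 - t 0 * s i.succ) * ((d i.succ j.succ)⁻¹ * (d 0 j.succ)⁻¹)) := by
      rw [Matrix.det_succ_column_zero, Fin.sum_univ_succ]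
      simp only [Matrix.of_apply, if_pos rfl, Fin.succ_ne_zero, if_neg, ite_true]
      rw [Fin.succAbove_zero]
      simp [Matrix.submatrix, Fin.succ_ne_zero]
    -- Step 7: factor from rows and columns
    have step7 : Matrix.det (Matrix.of fun i j : Fin n =>
            (t i.succ * s 0 - t 0 * s i.succ) * ((d i.succ j.succ)⁻¹ * (d 0 j.succ)⁻¹))
        = (∏ i : Fin n, (t i.succ * s 0 - t 0 * s i.succ)) * ((∏ j : Fin n, (d 0 j.succ)⁻¹) *
          Matrix.det (Matrix.of fun i j : Fin n => (d i.succ j.succ)⁻¹)) := by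
      calc Matrix.det (Matrix.of fun i j : Fin n =>
            (t i.succ * s 0 - t 0 * s i.succ) * ((d i.succ j.succ)⁻¹ * (d 0 j.succ)⁻¹))
          = Matrix.det (Matrix.of fun i j : Fin n =>
              (t i.succ * s 0 - t 0 * s i.succ) *
                (Matrix.of fun i j : Fin n => (d 0 j.succ)⁻¹ *
                  (Matrix.of fun i j : Fin n => (d i.succ j.succ)⁻¹) i j) i j) := by
            congr 1; ext i j; simp only [Matrix.of_apply]; ring
        _ = (∏ i : Fin n, (t i.succ * s 0 - t 0 * s i.succ)) *
            Matrix.det (Matrix.of fun i j : Fin n => (d 0 j.succ)⁻¹ *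
              (Matrix.of fun i j : Fin n => (d i.succ j.succ)⁻¹) i j) :=
            Matrix.det_mul_column _ _
        _ = (∏ i : Fin n, (t i.succ * s 0 - t 0 * s i.succ)) * ((∏ j : Fin n, (d 0 j.succ)⁻¹) *
            Matrix.det (Matrix.of fun i j : Fin n => (d i.succ j.succ)⁻¹)) := by
            rw [Matrix.det_mul_row]
    -- Step 8: induction hypothesis
    have step8 : Matrix.det (Matrix.of fun i j : Fin n => (d i.succ j.succ)⁻¹)
        = (∏ i : Fin n, ∏ j ∈ Finset.Ioi i,
            (t i.succ * s j.succ - t j.succ * s i.succ) * (u i.succ - u j.succ)) /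
          ∏ i : Fin n, ∏ j : Fin n, d i.succ j.succ := by
      exact ih (fun i => s i.succ) (fun i => t i.succ) (fun i => u i.succ)
        (fun i j => hd0 i.succ j.succ)
    -- product bookkeeping
    have P1 : (∏ i : Fin (n+1), if i = 0 then 1 else u i - u 0)
        = ∏ i : Fin n, (u i.succ - u 0) := by
      rw [Fin.prod_univ_succ]
      simp [Fin.succ_ne_zero]
    have P2 : (∏ j : Fin (n+1), (d j 0)⁻¹)
        = (d 0 0 * ∏ i : Fin n, d i.succ 0)⁻¹ := by
      rw [Fin.prod_univ_succ, mul_inv, ← Finset.prod_inv_distrib]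
    have P3 : (∏ j : Fin n, (d 0 j.succ)⁻¹) = (∏ j : Fin n, d 0 j.succ)⁻¹ := by
      rw [← Finset.prod_inv_distrib]
    have PN : (∏ i : Fin (n+1), ∏ j ∈ Finset.Ioi i, (t i * s j - t j * s i) * (u i - u j))
        = (∏ j : Fin n, (t 0 * s j.succ - t j.succ * s 0) * (u 0 - u j.succ)) *
          ∏ i : Fin n, ∏ j ∈ Finset.Ioi i,
            (t i.succ * s j.succ - t j.succ * s i.succ) * (u i.succ - u j.succ) := by
      rw [Fin.prod_univ_succ, Fin.prod_Ioi_zero]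
      congr 1
      exact Finset.prod_congr rfl fun i _ => Fin.prod_Ioi_succ _ i
    have PD : (∏ i : Fin (n+1), ∏ j : Fin (n+1), d i j)
        = (d 0 0 * ∏ j : Fin n, d 0 j.succ) *
          ((∏ i : Fin n, d i.succ 0) * ∏ i : Fin n, ∏ j : Fin n, d i.succ j.succ) := by
      rw [Fin.prod_univ_succ, Fin.prod_univ_succ]
      simp_rw [Fin.prod_univ_succ]
      rw [Finset.prod_mul_distrib]
    have Pkey : (∏ i : Fin n, (u i.succ - u 0)) *
          (∏ i : Fin n, (t i.succ * s 0 - t 0 * s i.succ))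
        = ∏ j : Fin n, (t 0 * s j.succ - t j.succ * s 0) * (u 0 - u j.succ) := by
      rw [← Finset.prod_mul_distrib]
      exact Finset.prod_congr rfl fun i _ => by ring
    have hA : d 0 0 ≠ 0 := hd0 0 0
    have hB : (∏ i : Fin n, d i.succ 0) ≠ 0 :=
      Finset.prod_ne_zero_iff.mpr fun i _ => hd0 i.succ 0
    have hC : (∏ j : Fin n, d 0 j.succ) ≠ 0 :=
      Finset.prod_ne_zero_iff.mpr fun j _ => hd0 0 j.succ
    have hE : (∏ i : Fin n, ∏ j : Fin n, d i.succ j.succ) ≠ 0 :=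
      Finset.prod_ne_zero_iff.mpr fun i _ =>
        Finset.prod_ne_zero_iff.mpr fun j _ => hd0 i.succ j.succ
    rw [step0, step1, step2, step3, step4, step5, step6, step7, step8,
      P1, P2, P3, PN, PD, ← Pkey]
    field_simp
    have e2 : ∏ x : Fin n, (s 0 * t x.succ - t 0 * s x.succ)
        = ∏ x : Fin n, (t x.succ * s 0 - t 0 * s x.succ) :=
      Finset.prod_congr rfl fun _ _ => by ring
    rw [e2]
    ring

/-- The symplectic analogue of the Cauchy determinant evaluation. -/
theorem symplectic_cauchy_determinant (n : ℕ) (hn : 1 ≤ n) (z w : Fin n → ℂ)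
    (hz0 : ∀ j, z j ≠ 0) (hwz : ∀ i j, w i * z j ≠ 1) (hwz' : ∀ i j, w i ≠ z j) :
    Matrix.det (Matrix.of fun i j : Fin n => ((1 - w i * z j) * (1 - w i / z j))⁻¹) =
      (∏ i : Fin n, ∏ j ∈ Finset.Ioi i,
          (z i - z j) * (w i - w j) * (1 - w i * w j) * (1 - 1 / (z i * z j))) /
        ∏ i : Fin n, ∏ j : Fin n, (1 - w i * z j) * (1 - w i / z j) := by
  have e : ∀ i j, (1 + w i ^ 2) - w i * (z j + (z j)⁻¹) =
      (1 - w i * z j) * (1 - w i / z j) := by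
    intro i j
    have hj := hz0 j
    field_simp
    ring
  have h : ∀ i j, (1 + w i ^ 2) - w i * (z j + (z j)⁻¹) ≠ 0 := by
    intro i j
    rw [e i j]
    refine mul_ne_zero (sub_ne_zero.mpr fun hq => hwz i j hq.symm)
      (sub_ne_zero.mpr fun hq => ?_)
    exact hwz' i j ((div_eq_one_iff_eq (hz0 j)).mp hq.symm)
  have key := gcauchy n (fun i => 1 + w i ^ 2) (fun i => w i) (fun j => z j + (z j)⁻¹) h
  have hM : (Matrix.of fun i j : Fin n => ((1 - w i * z j) * (1 - w i / z j))⁻¹)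
      = Matrix.of fun i j : Fin n => ((1 + w i ^ 2) - w i * (z j + (z j)⁻¹))⁻¹ := by
    ext i j
    simp only [Matrix.of_apply]
    rw [e i j]
  rw [hM, key]
  congr 1
  · refine Finset.prod_congr rfl fun i _ => Finset.prod_congr rfl fun j _ => ?_
    have hi := hz0 i
    have hj := hz0 j
    field_simp
    ring
  · exact Finset.prod_congr rfl fun i _ => Finset.prod_congr rfl fun j _ => e i j
end

section
/- Let 0 denote the empty specialization, with p_k(0) = 0 for all k ≥ 1, so that h_0(0) = 1 and h_k(0) = 0 for all k ≠ 0. Then for every partition λ, sp_λ(0) = (−1)^{|λ|/2} if λ ∈ A (in which case |λ| is even), and sp_λ(0) = 0 if λ ∉ A. -/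
open scoped BigOperators
open Filter

section AuxiliaryLemmas

namespace Partn

theorem dcfilter {n : ℕ} {P : ℕ → Prop} [DecidablePred P]
    (hdc : ∀ i j : ℕ, i ≤ j → P j → P i) (hlt : ∀ i, P i → i < n) :
    (Finset.range n).filter P = Finset.range (((Finset.range n).filter P).card) := by
  apply Finset.eq_of_subset_of_card_le
  · intro i hi
    rw [Finset.mem_filter, Finset.mem_range] at hi
    rw [Finset.mem_range]
    have hsub : Finset.range (i+1) ⊆ (Finset.range n).filter P := by
      intro j hj
      rw [Finset.mem_range] at hj
      rw [Finset.mem_filter, Finset.mem_range]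
      exact ⟨hlt j (hdc j i (Nat.lt_succ_iff.mp hj) hi.2), hdc j i (Nat.lt_succ_iff.mp hj) hi.2⟩
    calc i < i + 1 := Nat.lt_succ_self i
    _ = (Finset.range (i+1)).card := (Finset.card_range _).symm
    _ ≤ _ := Finset.card_le_card hsub
  · simp

variable (lam : Partn)

theorem f_eq_zero_iff (i : ℕ) : lam.f i = 0 ↔ lam.len ≤ i := by
  obtain ⟨N, hN⟩ := lam.finsupp
  have hne : {N | lam.f N = 0}.Nonempty := ⟨N, hN N le_rfl⟩
  constructor
  · intro h; exact Nat.sInf_le h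
  · intro h
    have : lam.f lam.len = 0 := Nat.sInf_mem hne
    exact Nat.le_zero.mp (this ▸ lam.antitone h)

theorem lt_len_iff (i : ℕ) : i < lam.len ↔ 0 < lam.f i := by
  rw [← not_le, ← not_le, ← f_eq_zero_iff, Nat.le_zero]

theorem lt_conj_iff (j k : ℕ) : j < lam.conj k ↔ k < lam.f j := by
  have h := dcfilter (n := lam.len) (P := fun j => k < lam.f j)
    (fun i j hij hj => lt_of_lt_of_le hj (lam.antitone hij))
    (fun i hi => (lam.lt_len_iff i).mpr (Nat.zero_lt_of_lt hi))
  have h2 : j ∈ (Finset.range lam.len).filter (fun j => k < lam.f j) ↔ j < lam.conj k := by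
    rw [conj, ← Finset.mem_range, ← h]
  rw [← h2, Finset.mem_filter, Finset.mem_range, lt_len_iff]
  constructor
  · exact fun hh => hh.2
  · exact fun hh => ⟨Nat.lt_of_le_of_lt (Nat.zero_le k) hh, hh⟩

theorem lt_frobDiag_iff (i : ℕ) : i < lam.frobDiag ↔ i < lam.f i := by
  have h := dcfilter (n := lam.len) (P := fun i => i < lam.f i)
    (fun i j hij hj => lt_of_le_of_lt hij (lt_of_lt_of_le hj (lam.antitone hij)))
    (fun i hi => (lam.lt_len_iff i).mpr (Nat.zero_lt_of_lt hi))
  have h2 : i ∈ (Finset.range lam.len).filter (fun i => i < lam.f i) ↔ i < lam.frobDiag := by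
    rw [frobDiag, ← Finset.mem_range, ← h]
  rw [← h2, Finset.mem_filter, Finset.mem_range, lt_len_iff]
  constructor
  · exact fun hh => hh.2
  · exact fun hh => ⟨Nat.zero_lt_of_lt hh, hh⟩

theorem frobDiag_le_len : lam.frobDiag ≤ lam.len :=
  le_trans (Finset.card_le_card (Finset.filter_subset _ _)) (le_of_eq (Finset.card_range _))

theorem conj_le_len (k : ℕ) : lam.conj k ≤ lam.len :=
  le_trans (Finset.card_le_card (Finset.filter_subset _ _)) (le_of_eq (Finset.card_range _))

theorem conj_antitone : ∀ ⦃k k' : ℕ⦄, k ≤ k' → lam.conj k' ≤ lam.conj k := by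
  intro k k' hkk
  by_contra h
  push_neg at h
  have h1 : lam.conj k < lam.conj k' := h
  have h2 : k' < lam.f (lam.conj k) := (lam.lt_conj_iff _ _).mp h1
  have h3 : lam.conj k < lam.conj k := (lam.lt_conj_iff _ _).mpr
    (lt_of_le_of_lt hkk h2)
  exact absurd h3 (lt_irrefl _)

theorem lt_conj_self_iff (k : ℕ) : k < lam.conj k ↔ k < lam.frobDiag := by
  rw [lam.lt_conj_iff, lam.lt_frobDiag_iff]

noncomputable def CC (lam : Partn) (i : ℕ) : ℤ := (lam.f i : ℤ) - i

theorem CC_strictAnti : StrictAnti lam.CC := by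
  intro i j hij
  have := lam.antitone hij.le
  unfold CC
  omega

theorem lt_frobDiag_iff' (i : ℕ) : i < lam.frobDiag ↔ 1 ≤ lam.CC i := by
  rw [lam.lt_frobDiag_iff]; unfold CC; omega

end Partn


theorem strictAntiOn_image_eq {d : ℕ} {u v : ℕ → ℤ}
    (hu : ∀ i j, i < j → j < d → u j < u i) (hv : ∀ i j, i < j → j < d → v j < v i)
    (him : (Finset.range d).image u = (Finset.range d).image v) :
    ∀ i < d, u i = v i := by
  intro i hi
  have hcard : ((Finset.range d).image u).card = d := by
    rw [Finset.card_image_of_injOn, Finset.card_range]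
    intro a ha b hb hab
    simp only [Finset.coe_range, Set.mem_Iio] at ha hb
    by_contra hne
    rcases Nat.lt_or_ge a b with h | h
    · exact absurd hab (hu a b h hb).ne'
    · exact absurd hab (hu b a (by omega) ha).ne
  have hFu : ∀ x : Fin d, u (d - 1 - x.val) ∈ (Finset.range d).image u := by
    intro x
    exact Finset.mem_image_of_mem u (Finset.mem_range.mpr (by omega))
  have hFv : ∀ x : Fin d, v (d - 1 - x.val) ∈ (Finset.range d).image u := by
    intro x
    rw [him]
    exact Finset.mem_image_of_mem v (Finset.mem_range.mpr (by omega))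
  have hmu : StrictMono (fun x : Fin d => u (d - 1 - x.val)) := by
    intro a b hab
    exact hu _ _ (by omega) (by omega)
  have hmv : StrictMono (fun x : Fin d => v (d - 1 - x.val)) := by
    intro a b hab
    exact hv _ _ (by omega) (by omega)
  have h1 := Finset.orderEmbOfFin_unique hcard hFu hmu
  have h2 := Finset.orderEmbOfFin_unique hcard hFv hmv
  have h3 : (fun x : Fin d => u (d - 1 - x.val)) = (fun x : Fin d => v (d - 1 - x.val)) := by
    rw [h1, h2]
  have h4 := congrFun h3 ⟨d - 1 - i, by omega⟩
  simpa [show d - 1 - (d - 1 - i) = i by omega] using h4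

namespace Partn
variable (lam : Partn)

theorem good_iff_inA (hn : 0 < lam.len) :
    ((∀ i < lam.len, (lam.CC i).natAbs < lam.len) ∧
     (∀ i j, i < lam.len → j < lam.len →
       (lam.CC i).natAbs = (lam.CC j).natAbs → i = j)) ↔ lam.InA := by
  set n := lam.len with hnd
  set d := lam.frobDiag with hdd'
  set C := lam.CC with hCd
  have hdn : d ≤ n := lam.frobDiag_le_len
  have hCanti : StrictAnti C := lam.CC_strictAnti
  have hd1 : ∀ i, i < d ↔ 1 ≤ C i := lam.lt_frobDiag_iff'
  have hCval : ∀ i, C i = (lam.f i : ℤ) - i := fun i => rfl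
  set S1 := (Finset.range d).image C with hS1d
  set S2 := (Finset.Ico d n).image (fun i => -C i) with hS2d
  set Cc := (Finset.range d).image (fun k => (lam.conj k : ℤ) - k - 1) with hCcd
  have hcard1 : S1.card = d := by
    rw [hS1d, Finset.card_image_of_injective _ hCanti.injective, Finset.card_range]
  have hinj2 : Function.Injective (fun i => -C i) := fun a b h =>
    hCanti.injective (neg_injective h)
  have hcard2 : S2.card = n - d := by
    rw [hS2d, Finset.card_image_of_injective _ hinj2, Nat.card_Ico]
  have hcardC : Cc.card = d := by
    rw [hCcd, Finset.card_image_of_injOn, Finset.card_range]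
    intro a ha b hb hab
    simp only [Finset.coe_range, Set.mem_Iio] at ha hb
    have hab' : (lam.conj a : ℤ) - a - 1 = (lam.conj b : ℤ) - b - 1 := hab
    by_contra hne
    rcases Nat.lt_or_ge a b with h | h
    · have := lam.conj_antitone h.le
      omega
    · have := lam.conj_antitone (show b ≤ a by omega)
      omega
  have hS2sub : S2 ⊆ Finset.Ico (0:ℤ) n := by
    intro x hx
    rw [hS2d, Finset.mem_image] at hx
    obtain ⟨i, hi, rfl⟩ := hx
    rw [Finset.mem_Ico] at hi
    have h1 : ¬ (1 ≤ C i) := by rw [← hd1]; omega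
    have h2 := hCval i
    rw [Finset.mem_Ico]
    omega
  have hCcsub : Cc ⊆ Finset.Ico (0:ℤ) n := by
    intro x hx
    rw [hCcd, Finset.mem_image] at hx
    obtain ⟨k, hk, rfl⟩ := hx
    rw [Finset.mem_range] at hk
    have h1 : k < lam.conj k := (lam.lt_conj_self_iff k).mpr hk
    have h2 : lam.conj k ≤ n := lam.conj_le_len k
    rw [Finset.mem_Ico]
    omega
  have hdisj : Disjoint S2 Cc := by
    rw [Finset.disjoint_left]
    intro x hx2 hxC
    rw [hS2d, Finset.mem_image] at hx2
    rw [hCcd, Finset.mem_image] at hxC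
    obtain ⟨i, hi, hix⟩ := hx2
    obtain ⟨k, hk, hkx⟩ := hxC
    rw [Finset.mem_Ico] at hi
    rw [Finset.mem_range] at hk
    have h2 := hCval i
    by_cases hcase : k < lam.f i
    · have h3 : i < lam.conj k := (lam.lt_conj_iff i k).mpr hcase
      omega
    · have h3 : ¬ (i < lam.conj k) := fun hc => hcase ((lam.lt_conj_iff i k).mp hc)
      omega
  have hunion : S2 ∪ Cc = Finset.Ico (0:ℤ) (n:ℤ) := by
    apply Finset.eq_of_subset_of_card_le
    · exact Finset.union_subset hS2sub hCcsub
    · rw [Finset.card_union_of_disjoint hdisj, hcard2, hcardC, Int.card_Ico]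
      omega
  constructor
  · -- Good → InA
    rintro ⟨hG1, hG2⟩
    have hS1sub : S1 ⊆ Cc := by
      intro x hx
      rw [hS1d, Finset.mem_image] at hx
      obtain ⟨i, hi, rfl⟩ := hx
      rw [Finset.mem_range] at hi
      have hipos : 1 ≤ C i := (hd1 i).mp hi
      have hin : i < n := lt_of_lt_of_le hi hdn
      have habs : (C i).natAbs < n := hG1 i hin
      have hmem : C i ∈ S2 ∪ Cc := by
        rw [hunion, Finset.mem_Ico]
        omega
      rw [Finset.mem_union] at hmem
      rcases hmem with hmem | hmem
      · exfalso
        rw [hS2d, Finset.mem_image] at hmem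
        obtain ⟨j, hj, hj2⟩ := hmem
        rw [Finset.mem_Ico] at hj
        have hj2' : -C j = C i := hj2
        have hji : j = i := hG2 j i hj.2 hin (by omega)
        omega
      · exact hmem
    have hS1C : S1 = Cc := Finset.eq_of_subset_of_card_le hS1sub (by rw [hcard1, hcardC])
    have hpt := strictAntiOn_image_eq
      (u := C) (v := fun k => (lam.conj k : ℤ) - k - 1)
      (fun i j hij hjd => hCanti hij)
      (fun i j hij hjd => by
        show (lam.conj j : ℤ) - j - 1 < (lam.conj i : ℤ) - i - 1
        have := lam.conj_antitone hij.le
        omega)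
      (by rw [← hS1d, ← hCcd, hS1C])
    intro i hi
    have h1 := hpt i hi
    have h2 := hCval i
    omega
  · -- InA → Good
    intro hA
    have hS1C : S1 = Cc := by
      rw [hS1d, hCcd]
      apply Finset.image_congr
      intro k hk
      simp only [Finset.coe_range, Set.mem_Iio] at hk
      show C k = (lam.conj k : ℤ) - k - 1
      have := hA k hk
      have h2 := hCval k
      omega
    have hmemIco : ∀ i < n, (i < d → C i ∈ Finset.Ico (0:ℤ) n) ∧
        (d ≤ i → -C i ∈ Finset.Ico (0:ℤ) n) := by
      intro i hin
      constructor
      · intro hid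
        apply hCcsub
        rw [← hS1C, hS1d]
        exact Finset.mem_image_of_mem C (Finset.mem_range.mpr hid)
      · intro hdi
        apply hS2sub
        rw [hS2d]
        exact Finset.mem_image_of_mem _ (Finset.mem_Ico.mpr ⟨hdi, hin⟩)
    constructor
    · intro i hin
      rcases Nat.lt_or_ge i d with hid | hdi
      · have := (hmemIco i hin).1 hid
        rw [Finset.mem_Ico] at this
        omega
      · have := (hmemIco i hin).2 hdi
        rw [Finset.mem_Ico] at this
        omega
    · intro i j hin hjn habs
      by_contra hne
      rcases Nat.lt_or_ge i d with hid | hdi <;> rcases Nat.lt_or_ge j d with hjd | hdj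
      · have h1 : 1 ≤ C i := (hd1 i).mp hid
        have h2 : 1 ≤ C j := (hd1 j).mp hjd
        exact hne (hCanti.injective (by omega))
      · -- i < d ≤ j : C i = -C j, contradiction with disjointness
        have h1 : 1 ≤ C i := (hd1 i).mp hid
        have h2 : ¬ (1 ≤ C j) := fun hc => by have := (hd1 j).mpr hc; omega
        have hCij : C i = -C j := by omega
        have hm1 : C i ∈ Cc := by
          rw [← hS1C, hS1d]
          exact Finset.mem_image_of_mem C (Finset.mem_range.mpr hid)
        have hm2 : C i ∈ S2 := by
          rw [hS2d, hCij]
          exact Finset.mem_image_of_mem _ (Finset.mem_Ico.mpr ⟨by omega, hjn⟩)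
        exact Finset.disjoint_left.mp hdisj hm2 hm1
      · have h1 : 1 ≤ C j := (hd1 j).mp hjd
        have h2 : ¬ (1 ≤ C i) := fun hc => by have := (hd1 i).mpr hc; omega
        have hCij : C j = -C i := by omega
        have hm1 : C j ∈ Cc := by
          rw [← hS1C, hS1d]
          exact Finset.mem_image_of_mem C (Finset.mem_range.mpr hjd)
        have hm2 : C j ∈ S2 := by
          rw [hS2d, hCij]
          exact Finset.mem_image_of_mem _ (Finset.mem_Ico.mpr ⟨by omega, hin⟩)
        exact Finset.disjoint_left.mp hdisj hm2 hm1
      · have h1 : ¬ (1 ≤ C i) := fun hc => by have := (hd1 i).mpr hc; omega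
        have h2 : ¬ (1 ≤ C j) := fun hc => by have := (hd1 j).mpr hc; omega
        exact hne (hCanti.injective (by omega))

end Partn


namespace Partn

theorem size_eq_hooks (lam : Partn) :
    lam.size = (∑ i ∈ Finset.range lam.frobDiag, (lam.f i - i))
      + (∑ k ∈ Finset.range lam.frobDiag, (lam.conj k - (k+1))) := by
  set n := lam.len
  set d := lam.frobDiag with hd
  have hdn : d ≤ n := lam.frobDiag_le_len
  have hsplit : ∀ i, lam.f i = (lam.f i - i) + min (lam.f i) i := fun i => by omega
  have h1 : lam.size = (∑ i ∈ Finset.range n, (lam.f i - i))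
      + (∑ i ∈ Finset.range n, min (lam.f i) i) := by
    rw [size, ← Finset.sum_add_distrib]
    exact Finset.sum_congr rfl fun i _ => hsplit i
  have h2 : ∑ i ∈ Finset.range n, (lam.f i - i) = ∑ i ∈ Finset.range d, (lam.f i - i) := by
    symm
    apply Finset.sum_subset (Finset.range_subset_range.mpr hdn)
    intro i _ hid
    rw [Finset.mem_range] at hid
    have : ¬ (i < lam.f i) := fun hc => hid ((lam.lt_frobDiag_iff i).mpr hc)
    omega
  have h3 : ∑ i ∈ Finset.range n, min (lam.f i) i
      = ∑ k ∈ Finset.range n, (lam.conj k - (k+1)) := by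
    have hstep : ∀ i ∈ Finset.range n, min (lam.f i) i
        = ∑ k ∈ Finset.range n, (if k < lam.f i ∧ k < i then 1 else 0) := by
      intro i hi
      rw [Finset.mem_range] at hi
      rw [← Finset.card_filter]
      have : (Finset.range n).filter (fun k => k < lam.f i ∧ k < i)
          = Finset.range (min (lam.f i) i) := by
        ext k
        simp only [Finset.mem_filter, Finset.mem_range]
        omega
      rw [this, Finset.card_range]
    rw [Finset.sum_congr rfl hstep, Finset.sum_comm]
    apply Finset.sum_congr rfl
    intro k _
    rw [← Finset.card_filter]
    have : (Finset.range n).filter (fun i => k < lam.f i ∧ k < i)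
        = Finset.Ico (k+1) (lam.conj k) := by
      ext i
      simp only [Finset.mem_filter, Finset.mem_range, Finset.mem_Ico]
      constructor
      · rintro ⟨hin, hkf, hki⟩
        exact ⟨hki, (lam.lt_conj_iff i k).mpr hkf⟩
      · rintro ⟨hki, hic⟩
        have hkf := (lam.lt_conj_iff i k).mp hic
        exact ⟨lt_of_lt_of_le hic (lam.conj_le_len k), hkf, hki⟩
    rw [this, Nat.card_Ico]
  have h4 : ∑ k ∈ Finset.range n, (lam.conj k - (k+1))
      = ∑ k ∈ Finset.range d, (lam.conj k - (k+1)) := by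
    symm
    apply Finset.sum_subset (Finset.range_subset_range.mpr hdn)
    intro k _ hkd
    rw [Finset.mem_range] at hkd
    have : ¬ (k < lam.conj k) := fun hc => hkd ((lam.lt_conj_self_iff k).mp hc)
    omega
  rw [h1, h2, h3, h4]

end Partn




theorem mySignAux_eq_sign {n : ℕ} (σ : Equiv.Perm (Fin n)) :
    Equiv.Perm.signAux σ = Equiv.Perm.sign σ := by
  refine Equiv.Perm.swap_induction_on σ ?_ ?_
  · simp [Equiv.Perm.signAux_one]
  · intro f x y hxy ih
    rw [Equiv.Perm.signAux_mul, Equiv.Perm.sign_mul, ih,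
      Equiv.Perm.signAux_swap hxy, Equiv.Perm.sign_swap hxy]

theorem mySign_eq_pow {n : ℕ} (σ : Equiv.Perm (Fin n)) :
    Equiv.Perm.sign σ =
      (-1) ^ (((Equiv.Perm.finPairsLT n).filter fun x => σ x.1 ≤ σ x.2).card) := by
  rw [← mySignAux_eq_sign]
  unfold Equiv.Perm.signAux
  rw [← Finset.prod_filter_mul_prod_filter_not (Equiv.Perm.finPairsLT n)
    (fun x => σ x.1 ≤ σ x.2)]
  rw [Finset.prod_congr rfl (fun x hx => if_pos (Finset.mem_filter.mp hx).2),
    Finset.prod_congr (rfl :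
      (Equiv.Perm.finPairsLT n).filter (fun x => ¬ σ x.1 ≤ σ x.2) = _)
      (fun x hx => if_neg (Finset.mem_filter.mp hx).2),
    Finset.prod_const, Finset.prod_const, one_pow, mul_one]

theorem card_inversions {n d : ℕ} (σ : Equiv.Perm (Fin n))
    (h1 : ∀ i j : Fin n, (j : ℕ) < d → i < j → σ j < σ i)
    (h2 : ∀ i j : Fin n, d ≤ (i : ℕ) → i < j → σ i < σ j) :
    ((Equiv.Perm.finPairsLT n).filter fun x => σ x.1 ≤ σ x.2).card
      = ∑ i : Fin n, if (i : ℕ) < d then ((σ i : ℕ)) else 0 := by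
  rw [Finset.card_eq_sum_card_fiberwise
    (f := fun x : Σ _ : Fin n, Fin n => x.2) (t := Finset.univ) (fun x _ => Finset.mem_univ _)]
  apply Finset.sum_congr rfl
  intro i _
  by_cases hid : (i : ℕ) < d
  · rw [if_pos hid]
    -- fiber over i equals the image under (j ↦ ⟨j, i⟩) of {j | σ j < σ i}
    have hfib : ((Equiv.Perm.finPairsLT n).filter (fun x => σ x.1 ≤ σ x.2)).filter
          (fun x => x.2 = i)
        = (Finset.univ.filter fun j : Fin n => σ j < σ i).map
            ⟨fun j => ⟨j, i⟩, fun a b hab => by simpa using congrArg Sigma.fst hab⟩ := by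
      ext x
      simp only [Finset.mem_filter, Finset.mem_map, Finset.mem_univ, true_and,
        Function.Embedding.coeFn_mk, Equiv.Perm.mem_finPairsLT]
      constructor
      · rintro ⟨⟨hlt, hle⟩, rfl⟩
        refine ⟨x.1, ?_, rfl⟩
        exact lt_of_le_of_ne hle (fun hc => absurd (σ.injective hc) (ne_of_gt hlt))
      · rintro ⟨j, hj, rfl⟩
        have hij : i < j := by
          rcases lt_trichotomy i j with h | h | h
          · exact h
          · exact absurd hj (by rw [h]; exact lt_irrefl _)
          · exact absurd hj (not_lt.mpr (h1 j i hid h).le)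
        exact ⟨⟨hij, hj.le⟩, rfl⟩
    rw [hfib, Finset.card_map]
    -- now |{j | σ j < σ i}| = σ i
    have : (Finset.univ.filter fun j : Fin n => σ j < σ i)
        = (Finset.univ.filter fun u : Fin n => u < σ i).map ⟨σ.symm, σ.symm.injective⟩ := by
      ext j
      simp only [Finset.mem_filter, Finset.mem_univ, true_and, Finset.mem_map,
        Function.Embedding.coeFn_mk]
      constructor
      · intro hj; exact ⟨σ j, hj, σ.symm_apply_apply j⟩
      · rintro ⟨u, hu, rfl⟩; rwa [σ.apply_symm_apply]
    rw [this, Finset.card_map]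
    have : (Finset.univ.filter fun u : Fin n => u < σ i) = Finset.Iio (σ i) := by
      ext u; simp
    rw [this, Fin.card_Iio]
  · rw [if_neg hid]
    rw [Finset.card_eq_zero, Finset.filter_eq_empty_iff]
    rintro x hx
    rw [Finset.mem_filter, Equiv.Perm.mem_finPairsLT] at hx
    intro hxi
    subst hxi
    exact absurd hx.2 (not_le.mpr (h2 x.2 x.1 (by omega) hx.1))


theorem hcf_zero : ∀ m : ℕ, hcf (fun _ => 0) m = if m = 0 then 1 else 0
  | 0 => by rw [hcf]; simp
  | (m+1) => by rw [hcf]; simp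

theorem hz_zero (k : ℤ) : hz (fun _ => 0) k = if k = 0 then 1 else 0 := by
  rw [hz]
  by_cases h : k < 0
  · rw [if_pos h, if_neg (by omega)]
  · rw [if_neg h, hcf_zero]
    exact if_congr (by omega) rfl rfl

theorem sp_main_aux (lam : Partn) :
    (lam.InA → Even lam.size ∧ spChar (fun _ => 0) lam = (-1 : ℂ) ^ (lam.size / 2)) ∧
    (¬ lam.InA → spChar (fun _ => 0) lam = 0) := by
  by_cases hn0 : lam.len = 0
  · have hA : lam.InA := by
      intro i hi
      have := lt_of_lt_of_le hi lam.frobDiag_le_len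
      omega
    have hsize : lam.size = 0 := by
      rw [Partn.size, hn0]
      simp
    constructor
    · intro _
      refine ⟨by simp [hsize], ?_⟩
      rw [spChar, if_pos hn0, hsize]
      norm_num
    · intro h; exact absurd hA h
  · have hn : 0 < lam.len := Nat.pos_of_ne_zero hn0
    have hCval : ∀ i : ℕ, lam.CC i = (lam.f i : ℤ) - i := fun _ => rfl
    have hd1 : ∀ i, i < lam.frobDiag ↔ 1 ≤ lam.CC i := lam.lt_frobDiag_iff'
    have hdn : lam.frobDiag ≤ lam.len := lam.frobDiag_le_len
    by_cases hA : lam.InA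
    · -- the nonvanishing case
      obtain ⟨hG1, hG2⟩ := (lam.good_iff_inA hn).mpr hA
      set d := lam.frobDiag with hdd
      have hσ0 : ∀ i : Fin lam.len, (lam.CC i.val).natAbs < lam.len :=
        fun i => hG1 i.val i.isLt
      set σ0 : Fin lam.len → Fin lam.len := fun i => ⟨(lam.CC i.val).natAbs, hσ0 i⟩ with hσ0d
      have hinj : Function.Injective σ0 := by
        intro a b hab
        exact Fin.ext (hG2 a.val b.val a.isLt b.isLt (by
          have := congrArg Fin.val hab
          simpa using this))
      let σ : Equiv.Perm (Fin lam.len) :=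
        Equiv.ofBijective σ0 (Finite.injective_iff_bijective.mp hinj)
      have hσ : ∀ i, σ i = σ0 i := fun i => rfl
      have hσval : ∀ i, (σ i : ℕ) = (lam.CC i.val).natAbs := fun i => rfl
      set w : Fin lam.len → ℂ := fun i => if lam.CC i.val = 0 then 2 else 1 with hwd
      have hM : (Matrix.of fun i j : Fin lam.len =>
            hz (fun _ => 0) ((lam.f i.val : ℤ) - (i.val : ℤ) + (j.val : ℤ)) +
            hz (fun _ => 0) ((lam.f i.val : ℤ) - (i.val : ℤ) - (j.val : ℤ)))
          = Matrix.diagonal w * σ.permMatrix ℂ := by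
        ext i j
        rw [Matrix.diagonal_mul, Matrix.of_apply, hz_zero, hz_zero]
        have hperm : σ.permMatrix ℂ i j = if σ i = j then 1 else 0 := by
          simp [Equiv.Perm.permMatrix, PEquiv.toMatrix_apply, Equiv.toPEquiv_apply,
            Option.mem_def, eq_comm]
        rw [hperm]
        have hCv := hCval i.val
        by_cases hj : σ i = j
        · have hjval : (j : ℕ) = (lam.CC i.val).natAbs := by rw [← hj]; exact hσval i
          rw [if_pos hj]
          show _ = (if lam.CC i.val = 0 then (2:ℂ) else 1) * 1
          rcases lt_trichotomy (lam.CC i.val) 0 with h | h | h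
          · rw [if_pos (by omega : (lam.f i.val : ℤ) - (i.val:ℤ) + (j.val:ℤ) = 0),
              if_neg (by omega : ¬ ((lam.f i.val : ℤ) - (i.val:ℤ) - (j.val:ℤ) = 0)),
              if_neg (by omega : ¬ (lam.CC i.val = 0))]
            norm_num
          · rw [if_pos (by omega : (lam.f i.val : ℤ) - (i.val:ℤ) + (j.val:ℤ) = 0),
              if_pos (by omega : (lam.f i.val : ℤ) - (i.val:ℤ) - (j.val:ℤ) = 0),
              if_pos h]
            norm_num
          · rw [if_neg (by omega : ¬ ((lam.f i.val : ℤ) - (i.val:ℤ) + (j.val:ℤ) = 0)),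
              if_pos (by omega : (lam.f i.val : ℤ) - (i.val:ℤ) - (j.val:ℤ) = 0),
              if_neg (by omega : ¬ (lam.CC i.val = 0))]
            norm_num
        · have hjval : (j : ℕ) ≠ (lam.CC i.val).natAbs := by
            intro hc
            exact hj (Fin.ext (by rw [hσval i, hc]))
          rw [if_neg hj,
            if_neg (by omega : ¬ ((lam.f i.val : ℤ) - (i.val:ℤ) + (j.val:ℤ) = 0)),
            if_neg (by omega : ¬ ((lam.f i.val : ℤ) - (i.val:ℤ) - (j.val:ℤ) = 0))]
          norm_num
      -- the exponent
      set K : ℕ := ∑ m ∈ Finset.range d, (lam.f m - m) with hKd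
      have hsize2 : lam.size = K + K := by
        rw [lam.size_eq_hooks, hKd]
        have : ∀ k ∈ Finset.range d, lam.conj k - (k+1) = lam.f k - k := by
          intro k hk
          rw [Finset.mem_range] at hk
          rw [hA k hk]
          omega
        rw [Finset.sum_congr rfl this]
      have hsign : Equiv.Perm.sign σ = (-1) ^ K := by
        rw [mySign_eq_pow, card_inversions σ (d := d)]
        · congr 1
          have hsummand : ∀ i : Fin lam.len,
              (if (i : ℕ) < d then ((σ i : ℕ)) else 0)
                = (fun m => if m < d then (lam.CC m).natAbs else 0) i.val := by
            intro i
            simp only [hσval i]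
          rw [Finset.sum_congr rfl (fun i _ => hsummand i),
            Fin.sum_univ_eq_sum_range (fun m => if m < d then (lam.CC m).natAbs else 0)]
          rw [hKd]
          rw [← Finset.sum_subset (Finset.range_subset_range.mpr hdn)
            (fun m _ hm => by rw [Finset.mem_range] at hm; rw [if_neg (by omega)])]
          apply Finset.sum_congr rfl
          intro m hm
          rw [Finset.mem_range] at hm
          rw [if_pos hm]
          have h1 : 1 ≤ lam.CC m := (hd1 m).mp hm
          have h2 := hCval m
          omega
        · -- decreasing on the first block
          intro i j hjd hij
          have h1 : 1 ≤ lam.CC j.val := (hd1 j.val).mp hjd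
          have h2 : lam.CC j.val < lam.CC i.val := lam.CC_strictAnti hij
          rw [Fin.lt_def, hσval i, hσval j]
          omega
        · -- increasing on the second block
          intro i j hdi hij
          have h1 : ¬ (1 ≤ lam.CC i.val) := fun hc => by
            have := (hd1 i.val).mpr hc; omega
          have h2 : lam.CC j.val < lam.CC i.val := lam.CC_strictAnti hij
          rw [Fin.lt_def, hσval i, hσval j]
          omega
      have hprodw : ∏ i, w i = 2 := by
        have hstep : ∀ i, w i
            = (if σ i = (⟨0, hn⟩ : Fin lam.len) then (2:ℂ) else 1) := by
          intro i
          show (if lam.CC i.val = 0 then (2:ℂ) else 1) = _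
          refine if_congr ?_ rfl rfl
          rw [Fin.ext_iff, hσval i]
          simp [Int.natAbs_eq_zero]
        calc ∏ i, w i
            = ∏ i, (if σ i = (⟨0, hn⟩ : Fin lam.len) then (2:ℂ) else 1) :=
              Finset.prod_congr rfl (fun i _ => hstep i)
          _ = ∏ j : Fin lam.len, (if j = (⟨0, hn⟩ : Fin lam.len) then (2:ℂ) else 1) := by
              exact Equiv.prod_comp σ
                (fun j => if j = (⟨0, hn⟩ : Fin lam.len) then (2:ℂ) else 1)
          _ = 2 := by
              rw [Finset.prod_ite_eq' Finset.univ (⟨0, hn⟩ : Fin lam.len) (fun _ => (2:ℂ)),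
                if_pos (Finset.mem_univ _)]
      have hhalf : lam.size / 2 = K := by omega
      refine ⟨fun _ => ⟨⟨K, by omega⟩, ?_⟩, fun h => absurd hA h⟩
      rw [spChar, if_neg hn0, hM, Matrix.det_mul, Matrix.det_diagonal, hprodw,
        Matrix.det_permutation, hsign, hhalf]
      push_cast
      ring
    · -- the vanishing case
      refine ⟨fun h => absurd h hA, fun _ => ?_⟩
      have hng : ¬ ((∀ i < lam.len, (lam.CC i).natAbs < lam.len) ∧
          (∀ i j, i < lam.len → j < lam.len →
            (lam.CC i).natAbs = (lam.CC j).natAbs → i = j)) :=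
        fun hg => hA ((lam.good_iff_inA hn).mp hg)
      rw [spChar, if_neg hn0]
      rcases not_and_or.mp hng with hg | hg
      · push_neg at hg
        obtain ⟨i, hi, habs⟩ := hg
        have hdet : (Matrix.of fun i j : Fin lam.len =>
              hz (fun _ => 0) ((lam.f i.val : ℤ) - (i.val : ℤ) + (j.val : ℤ)) +
              hz (fun _ => 0) ((lam.f i.val : ℤ) - (i.val : ℤ) - (j.val : ℤ))).det = 0 := by
          apply Matrix.det_eq_zero_of_row_eq_zero (⟨i, hi⟩ : Fin lam.len)
          intro j
          rw [Matrix.of_apply, hz_zero, hz_zero]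
          have hCv := hCval i
          have hjn : (j : ℕ) < lam.len := j.isLt
          rw [if_neg (by simp only; omega), if_neg (by simp only; omega)]
          norm_num
        rw [hdet, mul_zero]
      · push_neg at hg
        obtain ⟨i, j, hi, hj, habs, hne⟩ := hg
        have hdet : (Matrix.of fun i j : Fin lam.len =>
              hz (fun _ => 0) ((lam.f i.val : ℤ) - (i.val : ℤ) + (j.val : ℤ)) +
              hz (fun _ => 0) ((lam.f i.val : ℤ) - (i.val : ℤ) - (j.val : ℤ))).det = 0 := by
          apply Matrix.det_zero_of_row_eq (i := (⟨i, hi⟩ : Fin lam.len))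
            (j := (⟨j, hj⟩ : Fin lam.len))
          · intro hc
            exact hne (by simpa using congrArg Fin.val hc)
          · funext k
            rw [Matrix.of_apply, Matrix.of_apply, hz_zero, hz_zero, hz_zero, hz_zero]
            have h1 : lam.CC i ≠ lam.CC j := fun hc =>
              hne (lam.CC_strictAnti.injective hc)
            have h2 := hCval i
            have h3 := hCval j
            have h4 : (lam.f i : ℤ) - i = -((lam.f j : ℤ) - j) := by omega
            simp only [Fin.val_mk]
            rw [if_congr
                (show ((lam.f i : ℤ) - (i:ℤ) + (k.val:ℤ) = 0)
                  ↔ ((lam.f j : ℤ) - (j:ℤ) - (k.val:ℤ) = 0) from by omega) rfl rfl,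
              if_congr
                (show ((lam.f i : ℤ) - (i:ℤ) - (k.val:ℤ) = 0)
                  ↔ ((lam.f j : ℤ) - (j:ℤ) + (k.val:ℤ) = 0) from by omega) rfl rfl]
            ring
        rw [hdet, mul_zero]


end AuxiliaryLemmas

/-- At the empty specialization (`p_k = 0` for all `k`), `sp_λ(0) = (−1)^{|λ|/2}` for
`λ ∈ A` (and `|λ|` is then even), and `sp_λ(0) = 0` otherwise. -/
theorem sp_at_empty_specialization (lam : Partn) :
    (lam.InA → Even lam.size ∧ spChar (fun _ => 0) lam = (-1 : ℂ) ^ (lam.size / 2)) ∧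
    (¬ lam.InA → spChar (fun _ => 0) lam = 0) :=
  sp_main_aux lam
end
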